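/- Fix integers n, k, t ≥ 1 with k ≤ n, and let X_1, ..., X_t be i.i.d. random variables uniformly distributed on {1, ..., n}. Then the probability that (X_1, ..., X_t) contains a non-increasing subsequence of length k is at most (2e^2 t / k^2)^k. -/

import Mathlib

open MeasureTheory ProbabilityTheory Filter

/-- Two strictly monotone maps from `Fin k` with the same image coincide. -/
lemma strictMono_eq_of_image_eq {α : Type*} [LinearOrder α] {k : ℕ} {f g : Fin k → α}
    (hf : StrictMono f) (hg : StrictMono g)
    (h : Set.range f = Set.range g) : f = g := by
  classical
  have hc : (Finset.image f Finset.univ).card = k := by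
    rw [Finset.card_image_of_injective _ hf.injective, Finset.card_univ, Fintype.card_fin]
  have h1 := Finset.orderEmbOfFin_unique hc
    (fun x => Finset.mem_image_of_mem f (Finset.mem_univ x)) hf
  have h2 := Finset.orderEmbOfFin_unique hc
    (fun x => by
      have : g x ∈ Set.range f := h ▸ Set.mem_range_self x
      obtain ⟨a, ha⟩ := this
      exact ha ▸ Finset.mem_image_of_mem f (Finset.mem_univ a)) hg
  exact h1.trans h2.symm

/-- Two strictly antitone maps from `Fin k` with the same image coincide. -/
lemma strictAnti_eq_of_image_eq {α : Type*} [LinearOrder α] {k : ℕ} {f g : Fin k → α}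
    (hf : StrictAnti f) (hg : StrictAnti g)
    (h : Set.range f = Set.range g) : f = g := by
  classical
  have hrevsurj : Function.Surjective (Fin.rev : Fin k → Fin k) :=
    fun x => ⟨x.rev, Fin.rev_rev x⟩
  have himg : ∀ p : Fin k → α, Set.range (p ∘ Fin.rev) = Set.range p := fun p =>
    hrevsurj.range_comp p
  have hf' : StrictMono (f ∘ Fin.rev) := fun a b hab => hf (Fin.rev_lt_rev.mpr hab)
  have hg' : StrictMono (g ∘ Fin.rev) := fun a b hab => hg (Fin.rev_lt_rev.mpr hab)
  have heq := strictMono_eq_of_image_eq hf' hg' (by rw [himg, himg, h])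
  funext a
  have := congrFun heq a.rev
  simpa [Fin.rev_rev] using this

/-- Counting lemma: a family of injective maps `Fin k → α`, pairwise distinguished by their
images, injects (together with a permutation) into any permutation-closed target. -/
lemma card_mul_factorial_le {α : Type*} [DecidableEq α] {k : ℕ} (s T : Finset (Fin k → α))
    (hinj : ∀ f ∈ s, Function.Injective f)
    (huniq : ∀ f ∈ s, ∀ g ∈ s, Set.range f = Set.range g → f = g)
    (hT : ∀ f ∈ s, ∀ σ : Equiv.Perm (Fin k), f ∘ σ ∈ T) :
    s.card * k.factorial ≤ T.card := by
  classical
  have hcard : (s ×ˢ (Finset.univ : Finset (Equiv.Perm (Fin k)))).card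
      = s.card * k.factorial := by
    rw [Finset.card_product, Finset.card_univ, Fintype.card_perm, Fintype.card_fin]
  rw [← hcard]
  apply Finset.card_le_card_of_injOn (fun p => p.1 ∘ p.2)
  · rintro ⟨f, σ⟩ hp
    rw [Finset.mem_coe, Finset.mem_product] at hp
    exact hT f hp.1 σ
  · rintro ⟨f, σ⟩ hp ⟨g, τ⟩ hq hfs0
    have hfs : f ∘ ⇑σ = g ∘ ⇑τ := hfs0
    simp only [Finset.coe_product, Set.mem_prod, Finset.mem_coe, Finset.mem_product] at hp hq
    have himg : ∀ (p : Fin k → α) (σ : Equiv.Perm (Fin k)),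
        Set.range (p ∘ σ) = Set.range p := fun p σ => σ.surjective.range_comp p
    have hfg : f = g := by
      apply huniq f hp.1 g hq.1
      rw [← himg f σ, ← himg g τ, hfs]
    subst hfg
    have hστ : σ = τ := by
      ext a
      exact congrArg Fin.val (hinj f hp.1 (congrFun hfs a))
    rw [hστ]

/-- `k^k ≤ e^k · k!` over the reals. -/
lemma pow_self_le_exp_mul_factorial (k : ℕ) :
    (k : ℝ) ^ k ≤ Real.exp 1 ^ k * k.factorial := by
  have hfac : (0 : ℝ) < k.factorial := by positivity
  have h1 : (k : ℝ) ^ k / k.factorial ≤ Real.exp k := by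
    refine le_trans ?_ (Real.sum_le_exp_of_nonneg (by positivity) (k + 1))
    exact Finset.single_le_sum (f := fun i => (k : ℝ) ^ i / i.factorial)
      (fun i _ => by positivity) (Finset.self_mem_range_succ k)
  have h2 : Real.exp k = Real.exp 1 ^ k := by
    rw [← Real.exp_nat_mul, mul_one]
  rw [div_le_iff₀ hfac] at h1
  rw [h2] at h1
  exact h1

theorem nonincreasing_subsequence_prob_upper_bound
    (n k t : ℕ) (hn : 1 ≤ n) (hk : 1 ≤ k) (ht : 1 ≤ t) (hkn : k ≤ n)
    (Ω : Type*) [MeasureSpace Ω] [IsProbabilityMeasure (ℙ : Measure Ω)]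
    (X : Fin t → Ω → ℕ) (hmeas : ∀ i, Measurable (X i))
    (hindep : iIndepFun X ℙ)
    (hunif : ∀ i m, ℙ {ω | X i ω = m} =
      if m ∈ Finset.Icc 1 n then ((n : ENNReal))⁻¹ else 0) :
    (ℙ {ω | ∃ ι : Fin k → Fin t, StrictMono ι ∧
        Antitone (fun a => X (ι a) ω)}).toReal ≤
      (2 * Real.exp 1 ^ 2 * t / k ^ 2) ^ k := by
  classical
  have hk0 : Nonempty (Fin k) := ⟨⟨0, hk⟩⟩
  -- the collections of index maps and value tuples
  set G : Finset (Fin k → Fin t) :=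
    Finset.univ.filter (fun ι => StrictMono ι) with hG
  set M : Finset (Fin k → ℕ) :=
    (Fintype.piFinset (fun _ : Fin k => Finset.Icc 1 n)).filter (fun m => Antitone m) with hM
  set A : (Fin k → Fin t) → (Fin k → ℕ) → Set Ω :=
    fun ι m => ⋂ a, {ω | X (ι a) ω = m a} with hA
  set Nbad : Set Ω := ⋃ i : Fin t, {ω | X i ω ∉ Finset.Icc 1 n} with hNbad
  -- each X i lies in Icc 1 n almost surely
  have hone : ∀ i : Fin t, ℙ {ω | X i ω ∈ Finset.Icc 1 n} = 1 := by
    intro i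
    have hset : {ω | X i ω ∈ Finset.Icc 1 n} = ⋃ m ∈ Finset.Icc 1 n, {ω | X i ω = m} := by
      ext ω; simp
    rw [hset, measure_biUnion_finset]
    · have : ∀ m ∈ Finset.Icc 1 n, ℙ {ω | X i ω = m} = ((n : ENNReal))⁻¹ := by
        intro m hm; rw [hunif, if_pos hm]
      rw [Finset.sum_congr rfl this, Finset.sum_const, Nat.card_Icc]
      simp only [nsmul_eq_mul, Nat.add_sub_cancel]
      exact ENNReal.mul_inv_cancel (by exact_mod_cast (by omega : n ≠ 0))
        (ENNReal.natCast_ne_top n)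
    · intro a ha b hb hab
      rw [Function.onFun, Set.disjoint_left]
      intro ω hωa hωb
      exact hab (hωa.symm.trans hωb)
    · intro m _
      exact hmeas i (measurableSet_singleton m)
  have hbadi : ∀ i : Fin t, ℙ {ω | X i ω ∉ Finset.Icc 1 n} = 0 := by
    intro i
    have hc : {ω | X i ω ∉ Finset.Icc 1 n} = {ω | X i ω ∈ Finset.Icc 1 n}ᶜ := rfl
    have hms : MeasurableSet {ω | X i ω ∈ Finset.Icc 1 n} :=
      hmeas i (Set.to_countable {x | x ∈ Finset.Icc 1 n}).measurableSet
    rw [hc, measure_compl hms (measure_ne_top _ _), hone, measure_univ, tsub_self]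
  have hbad : ℙ Nbad = 0 := by
    refine le_antisymm ?_ zero_le
    refine le_trans (measure_iUnion_le _) ?_
    simp only [hbadi, tsum_zero, le_refl]
  -- probability of each atom event
  have hPA : ∀ ι ∈ G, ∀ m ∈ M, ℙ (A ι m) = ((n : ENNReal))⁻¹ ^ k := by
    intro ι hι m hm
    rw [hG, Finset.mem_filter] at hι
    have hιmono : StrictMono ι := hι.2
    rw [hM, Finset.mem_filter, Fintype.mem_piFinset] at hm
    set sets : Fin t → Set ℕ := fun i => {m (Function.invFun ι i)} with hsets
    have hprod := hindep.measure_inter_preimage_eq_mul (sets := sets)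
      (Finset.image ι Finset.univ) (fun i _ => measurableSet_singleton _)
    have hinv : ∀ a, Function.invFun ι (ι a) = a :=
      Function.leftInverse_invFun hιmono.injective
    have hsetEq : (⋂ i ∈ Finset.image ι Finset.univ, X i ⁻¹' sets i) = A ι m := by
      ext ω
      simp only [Set.mem_iInter, Finset.mem_image, Finset.mem_univ, true_and,
        Set.mem_preimage, hsets, Set.mem_singleton_iff, hA, Set.mem_setOf_eq]
      constructor
      · intro h a
        have := h (ι a) ⟨a, rfl⟩
        rwa [hinv a] at this
      · rintro h i ⟨a, rfl⟩
        rw [hinv a]; exact h a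
    rw [hsetEq] at hprod
    rw [hprod, Finset.prod_image (fun a _ b _ hab => hιmono.injective hab)]
    have : ∀ a : Fin k, ℙ (X (ι a) ⁻¹' sets (ι a)) = ((n : ENNReal))⁻¹ := by
      intro a
      have hps : X (ι a) ⁻¹' sets (ι a) = {ω | X (ι a) ω = m a} := by
        ext ω; simp [hsets, hinv a]
      rw [hps, hunif, if_pos (hm.1 a)]
    rw [Finset.prod_congr rfl (fun a _ => this a), Finset.prod_const, Finset.card_univ,
      Fintype.card_fin]
  -- the inclusion and union bound
  have hsub : {ω | ∃ ι : Fin k → Fin t, StrictMono ι ∧ Antitone (fun a => X (ι a) ω)}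
      ⊆ ⋃ ι ∈ G, (Nbad ∪ ⋃ m ∈ M, A ι m) := by
    intro ω hω
    obtain ⟨ι, hι, hanti⟩ := hω
    refine Set.mem_biUnion (Finset.mem_filter.mpr ⟨Finset.mem_univ _, hι⟩) ?_
    by_cases hb : ω ∈ Nbad
    · exact Set.mem_union_left _ hb
    · refine Set.mem_union_right _ ?_
      have hgood : ∀ i, X i ω ∈ Finset.Icc 1 n := by
        simp only [hNbad, Set.mem_iUnion, Set.mem_setOf_eq, not_exists, not_not] at hb
        exact hb
      have hmem : (fun a => X (ι a) ω) ∈ M := by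
        rw [hM, Finset.mem_filter, Fintype.mem_piFinset]
        exact ⟨fun a => Finset.mem_coe.mp (hgood _), hanti⟩
      exact Set.mem_biUnion hmem (Set.mem_iInter.mpr fun a => rfl)
  have hP : ℙ {ω | ∃ ι : Fin k → Fin t, StrictMono ι ∧ Antitone (fun a => X (ι a) ω)}
      ≤ (G.card : ENNReal) * ((M.card : ENNReal) * ((n : ENNReal))⁻¹ ^ k) := by
    calc ℙ {ω | ∃ ι : Fin k → Fin t, StrictMono ι ∧ Antitone (fun a => X (ι a) ω)}
        ≤ ∑ ι ∈ G, ℙ (Nbad ∪ ⋃ m ∈ M, A ι m) :=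
          (measure_mono hsub).trans (measure_biUnion_finset_le _ _)
      _ ≤ ∑ ι ∈ G, ((M.card : ENNReal) * ((n : ENNReal))⁻¹ ^ k) := by
          refine Finset.sum_le_sum fun ι hι => ?_
          refine le_trans (measure_union_le _ _) ?_
          rw [hbad, zero_add]
          refine le_trans (measure_biUnion_finset_le _ _) ?_
          rw [Finset.sum_congr rfl (fun m hm => hPA ι hι m hm), Finset.sum_const,
            nsmul_eq_mul]
      _ = (G.card : ENNReal) * ((M.card : ENNReal) * ((n : ENNReal))⁻¹ ^ k) := by
          rw [Finset.sum_const, nsmul_eq_mul]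
  -- counting bounds
  have hGcount : G.card * k.factorial ≤ t ^ k := by
    have := card_mul_factorial_le G Finset.univ
      (fun f hf => ((Finset.mem_filter.mp hf).2).injective)
      (fun f hf g hg => strictMono_eq_of_image_eq (Finset.mem_filter.mp hf).2
        (Finset.mem_filter.mp hg).2)
      (fun f _ σ => Finset.mem_univ _)
    rwa [Finset.card_univ, Fintype.card_fun, Fintype.card_fin, Fintype.card_fin] at this
  set S : Finset (Fin k → ℕ) :=
    (Fintype.piFinset (fun _ : Fin k => Finset.Icc 1 (n + k - 1))).filter
      (fun g => StrictAnti g) with hS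
  have hMS : M.card ≤ S.card := by
    apply Finset.card_le_card_of_injOn (fun m => fun a : Fin k => m a + (k - 1 - a.val))
    · intro m hm
      rw [hM, Finset.mem_coe, Finset.mem_filter, Fintype.mem_piFinset] at hm
      rw [hS, Finset.mem_coe, Finset.mem_filter, Fintype.mem_piFinset]
      constructor
      · intro a
        have h1 := hm.1 a
        rw [Finset.mem_Icc] at h1 ⊢
        have : a.val < k := a.isLt
        beta_reduce
        omega
      · intro a b hab
        have h1 : m b ≤ m a := hm.2 hab.le
        have h2 : a.val < b.val := hab
        have h3 : b.val < k := b.isLt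
        simp only []
        omega
    · intro m hm m' hm' h
      funext a
      have := congrFun h a
      simp only [] at this
      omega
  have hScount : S.card * k.factorial ≤ (2 * n) ^ k := by
    have h1 := card_mul_factorial_le S
      (Fintype.piFinset (fun _ : Fin k => Finset.Icc 1 (n + k - 1)))
      (fun f hf => ((Finset.mem_filter.mp hf).2).injective)
      (fun f hf g hg => strictAnti_eq_of_image_eq (Finset.mem_filter.mp hf).2
        (Finset.mem_filter.mp hg).2)
      (fun f hf σ => by
        rw [hS, Finset.mem_filter, Fintype.mem_piFinset] at hf
        rw [Fintype.mem_piFinset]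
        exact fun a => hf.1 (σ a))
    rw [Fintype.card_piFinset] at h1
    simp only [Nat.card_Icc, Nat.add_sub_cancel, Finset.prod_const, Finset.card_univ,
      Fintype.card_fin] at h1
    refine h1.trans (Nat.pow_le_pow_left (by omega) k)
  -- pass to the reals
  have hRHSne : (G.card : ENNReal) * ((M.card : ENNReal) * ((n : ENNReal))⁻¹ ^ k) ≠ ⊤ := by
    apply ENNReal.mul_ne_top (ENNReal.natCast_ne_top _)
    apply ENNReal.mul_ne_top (ENNReal.natCast_ne_top _)
    apply ENNReal.pow_ne_top
    simp only [ne_eq, ENNReal.inv_eq_top, Nat.cast_eq_zero]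
    omega
  have hPr := ENNReal.toReal_mono hRHSne hP
  rw [ENNReal.toReal_mul, ENNReal.toReal_mul, ENNReal.toReal_pow, ENNReal.toReal_inv,
    ENNReal.toReal_natCast, ENNReal.toReal_natCast, ENNReal.toReal_natCast] at hPr
  refine hPr.trans ?_
  -- real-number computation
  have hfacpos : (0 : ℝ) < k.factorial := by positivity
  have hnpos : (0 : ℝ) < n := by exact_mod_cast hn
  have hkpos : (0 : ℝ) < k := by exact_mod_cast hk
  have htpos : (0 : ℝ) < t := by exact_mod_cast ht
  have hGR : (G.card : ℝ) ≤ (t : ℝ) ^ k / k.factorial := by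
    rw [le_div_iff₀ hfacpos]
    exact_mod_cast hGcount
  have hMR : (M.card : ℝ) ≤ (2 * n : ℝ) ^ k / k.factorial := by
    rw [le_div_iff₀ hfacpos]
    calc ((M.card : ℝ) * k.factorial) ≤ (S.card : ℝ) * k.factorial := by
          have : (M.card : ℝ) ≤ S.card := by exact_mod_cast hMS
          exact mul_le_mul_of_nonneg_right this hfacpos.le
      _ ≤ (2 * n : ℝ) ^ k := by exact_mod_cast hScount
  have hke := pow_self_le_exp_mul_factorial k
  have step1 : (G.card : ℝ) * ((M.card : ℝ) * ((n : ℝ))⁻¹ ^ k)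
      ≤ ((t : ℝ) ^ k / k.factorial) * (((2 * n : ℝ) ^ k / k.factorial) * ((n : ℝ))⁻¹ ^ k) := by
    have hMnonneg : (0 : ℝ) ≤ (M.card : ℝ) := Nat.cast_nonneg _
    gcongr
  refine step1.trans ?_
  have heq : ((t : ℝ) ^ k / k.factorial) * (((2 * n : ℝ) ^ k / k.factorial) * ((n : ℝ))⁻¹ ^ k)
      = 2 ^ k * (t : ℝ) ^ k / ((k.factorial : ℝ) * k.factorial) := by
    field_simp
    ring
    rw [← mul_pow, mul_inv_cancel₀ hnpos.ne', one_pow, one_mul]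
  rw [heq]
  have hpow2 : ((k : ℝ) ^ 2) ^ k = ((k : ℝ) ^ k) ^ 2 := by
    rw [← pow_mul, ← pow_mul, mul_comm]
  have hpowe : (Real.exp 1 ^ 2) ^ k = (Real.exp 1 ^ k) ^ 2 := by
    rw [← pow_mul, ← pow_mul, mul_comm]
  rw [div_pow, mul_pow, mul_pow, hpow2, hpowe, div_le_div_iff₀ (by positivity) (by positivity)]
  have h4 : ((k : ℝ) ^ k) * ((k : ℝ) ^ k)
      ≤ (Real.exp 1 ^ k * k.factorial) * (Real.exp 1 ^ k * k.factorial) :=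
    mul_le_mul hke hke (by positivity) (by positivity)
  nlinarith [mul_le_mul_of_nonneg_left h4 (show (0:ℝ) ≤ 2 ^ k * (t:ℝ) ^ k by positivity)]
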